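/- For each k = 1, …, e, the product ∏_{l=0}^{k−1} d_•^{(l)}(1) divides the product (∏_{l=0}^{k−1} m₁^{(l)}(2)) · (∏_{l=0}^{k−1} m₂^{(l)}(1)). That is, the degree d_• d_•' d_•^{(2)} ⋯ d_•^{(k−1)} of the surface defined by the first k characteristic terms divides (m₁ m₁'(2) m₁^{(2)}(2) ⋯ m₁^{(k−1)}(2)) · (m₂ m₂'(1) m₂^{(2)}(1) ⋯ m₂^{(k−1)}(1)). -/

import Mathlib

/-- The data of a reduced irreducible quasi-ordinary prototype surface branch
`ζ = Σ_{j=1}^e x₁^{λ_{1,j}} x₂^{λ_{2,j}}` together with, for each choice `i ∈ {1,2}`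
of the recursion, the derived exponent sequences `λ^{(k)}_{u,j}(i)`, the lowest-terms
representations `λ^{(k)}_{u,1}(i) = n_u^{(k)}(i) / m_u^{(k)}(i)` of the leading
exponents, and the minimal nonnegative integers `r_i^{(k)}, s_i^{(k)}` with
`m_ĩ^{(k)}(i)·s_i^{(k)} − n_ĩ^{(k)}(i)·r_i^{(k)} = 1`.

The `Bool` index `false` corresponds to the index `1` of the paper and `true` to `2`;
for an index `i`, the other index `ĩ` is `!i`. -/
structure QOData where
  /-- the number `e ≥ 1` of characteristic terms -/
  e : ℕ
  he : 1 ≤ e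
  /-- the characteristic exponents `λ_{u,j}` for `u ∈ {1,2}`, `j = 1,…,e` -/
  lam0 : Bool → ℕ → ℚ
  /-- the derived exponents `λ^{(k)}_{u,j}(i)`; the arguments are, in order, `i u k j`,
  with `k = 0,…,e−1` and `j = 1,…,e−k` -/
  lam : Bool → Bool → ℕ → ℕ → ℚ
  /-- the numerators `n_u^{(k)}(i)`; the arguments are, in order, `i u k` -/
  n : Bool → Bool → ℕ → ℤ
  /-- the denominators `m_u^{(k)}(i) ≥ 1`; the arguments are, in order, `i u k` -/
  m : Bool → Bool → ℕ → ℕ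
  /-- `r_i^{(k)}`; the arguments are, in order, `i k` -/
  r : Bool → ℕ → ℕ
  /-- `s_i^{(k)}`; the arguments are, in order, `i k` -/
  s : Bool → ℕ → ℕ
  /-- the leading exponents are positive -/
  pos : ∀ u, 0 < lam0 u 1
  /-- the exponents are nondecreasing in `j` -/
  mono : ∀ u j, 1 ≤ j → j < e → lam0 u j ≤ lam0 u (j + 1)
  /-- each characteristic pair is essential: it does not lie in the subgroup of `ℚ²`
  generated by `ℤ²` together with the earlier pairs -/
  essential : ∀ j, 1 ≤ j → j ≤ e →
    (lam0 false j, lam0 true j) ∉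
      AddSubgroup.closure
        ((Set.range fun p : ℤ × ℤ => ((p.1 : ℚ), (p.2 : ℚ))) ∪
          {q : ℚ × ℚ | ∃ l, 1 ≤ l ∧ l < j ∧ q = (lam0 false l, lam0 true l)})
  /-- `λ^{(0)}_{u,j}(i) = λ_{u,j}` -/
  base : ∀ i u j, lam i u 0 j = lam0 u j
  /-- the denominators are at least 1 -/
  m_pos : ∀ i u k, k ≤ e - 1 → 1 ≤ m i u k
  /-- the leading exponents are written in lowest terms -/
  cop : ∀ i u k, k ≤ e - 1 → Int.gcd (n i u k) (m i u k : ℤ) = 1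
  /-- `λ^{(k)}_{u,1}(i) = n_u^{(k)}(i) / m_u^{(k)}(i)` -/
  lead : ∀ i u k, k ≤ e - 1 → lam i u k 1 = (n i u k : ℚ) / (m i u k : ℚ)
  /-- `m_ĩ^{(k)}(i)·s_i^{(k)} − n_ĩ^{(k)}(i)·r_i^{(k)} = 1` -/
  rs_det : ∀ i k, k ≤ e - 1 →
    (m i (!i) k : ℤ) * (s i k : ℤ) - n i (!i) k * (r i k : ℤ) = 1
  /-- `r_i^{(k)}` and `s_i^{(k)}` are the smallest nonnegative integers satisfying
  the determinant condition -/
  rs_min : ∀ i k, k ≤ e - 1 → ∀ r' s' : ℕ,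
    (m i (!i) k : ℤ) * (s' : ℤ) - n i (!i) k * (r' : ℤ) = 1 → r i k ≤ r' ∧ s i k ≤ s'
  /-- the recursion for `λ^{(k+1)}_{ĩ,j}(i)`, where `d_•^{(k)}(i) = lcm(m₁^{(k)}(i), m₂^{(k)}(i))` -/
  rec_other : ∀ i k j, k + 1 ≤ e - 1 → 1 ≤ j → j ≤ e - (k + 1) →
    lam i (!i) (k + 1) j =
      (m i (!i) k : ℚ) *
        (lam i (!i) k (j + 1) - lam i (!i) k 1 +
          (Nat.lcm (m i false k) (m i true k) : ℚ) * lam i (!i) k 1)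
  /-- the recursion for `λ^{(k+1)}_{i,j}(i)`, where
  `b_i^{(k)} = d_•^{(k)}(i) / m_ĩ^{(k)}(i)` -/
  rec_self : ∀ i k j, k + 1 ≤ e - 1 → 1 ≤ j → j ≤ e - (k + 1) →
    lam i i (k + 1) j =
      ((Nat.lcm (m i false k) (m i true k) / m i (!i) k : ℕ) : ℚ) *
        (lam i i k (j + 1) - lam i i k 1 +
          (Nat.lcm (m i false k) (m i true k) : ℚ) * lam i i k 1) +
      ((Nat.lcm (m i false k) (m i true k) / m i (!i) k : ℕ) : ℚ) * (r i k : ℚ) *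
        lam i i k 1 * lam i (!i) (k + 1) j

namespace QOData

variable (D : QOData)

/-- `d_•^{(k)}(i) = lcm(m₁^{(k)}(i), m₂^{(k)}(i))` -/
def dd (i : Bool) (k : ℕ) : ℕ := Nat.lcm (D.m i false k) (D.m i true k)

/-- `b_i^{(k)} = d_•^{(k)}(i) / m_ĩ^{(k)}(i)` -/
def b (i : Bool) (k : ℕ) : ℕ := D.dd i k / D.m i (!i) k

/-- `c_•^{(k)}(i) = gcd(n₁^{(k)}(i), n₂^{(k)}(i))` -/
def c (i : Bool) (k : ℕ) : ℕ := Int.gcd (D.n i false k) (D.n i true k)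

/-- `d^{(k)}(i) = ∏_{l=k}^{e−1} d_•^{(l)}(i)`, the degree of the `k`-th derived surface -/
def dTot (i : Bool) (k : ℕ) : ℕ := ∏ l ∈ Finset.Ico k D.e, D.dd i l

end QOData

/-- Integrality: the product of the `m_ĩ^{(l)}(i)` for `l = t,…,k−1` clears the
denominator of every derived exponent `λ^{(t)}_{ĩ,j}(i)` with `t + j ≤ k`. -/
lemma QOData.intB (D : QOData) (i : Bool) (k : ℕ) (hke : k ≤ D.e) :
    ∀ t j, 1 ≤ j → t + j ≤ k →
      ∃ z : ℤ, ((∏ l ∈ Finset.Ico t k, D.m i (!i) l : ℕ) : ℚ) * D.lam i (!i) t j = (z : ℚ) := by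
  have he := D.he
  intro t j
  induction j generalizing t with
  | zero => intro h; omega
  | succ j ih =>
    intro _ htj
    have ht1 : t < k := by omega
    have hte : t ≤ D.e - 1 := by omega
    have hm : (1:ℕ) ≤ D.m i (!i) t := D.m_pos i (!i) t hte
    have hmQ : ((D.m i (!i) t : ℕ) : ℚ) ≠ 0 := by
      have : (0:ℕ) < D.m i (!i) t := hm
      exact_mod_cast this.ne'
    have hsplit : (∏ l ∈ Finset.Ico t k, D.m i (!i) l)
        = D.m i (!i) t * ∏ l ∈ Finset.Ico (t+1) k, D.m i (!i) l :=
      Finset.prod_eq_prod_Ico_succ_bot ht1 _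
    have hl := D.lead i (!i) t hte
    have hn : ((D.m i (!i) t : ℕ) : ℚ) * D.lam i (!i) t 1 = (D.n i (!i) t : ℚ) := by
      rw [hl]; field_simp
    rcases Nat.eq_zero_or_pos j with hj0 | hj1
    · subst hj0
      refine ⟨(∏ l ∈ Finset.Ico (t+1) k, D.m i (!i) l : ℕ) * D.n i (!i) t, ?_⟩
      rw [hsplit]
      push_cast
      linear_combination ((∏ l ∈ Finset.Ico (t+1) k, (D.m i (!i) l : ℚ))) * hn
    · have hrec := D.rec_other i t j (by omega) hj1 (by omega)
      obtain ⟨z, hz⟩ := ih (t+1) hj1 (by omega)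
      rw [hrec] at hz
      refine ⟨z + (∏ l ∈ Finset.Ico (t+1) k, D.m i (!i) l : ℕ) *
        (1 - (Nat.lcm (D.m i false t) (D.m i true t) : ℤ)) * D.n i (!i) t, ?_⟩
      rw [hsplit]
      push_cast
      push_cast at hz
      linear_combination hz + ((∏ l ∈ Finset.Ico (t+1) k, (D.m i (!i) l : ℚ)))
        * (1 - (Nat.lcm (D.m i false t) (D.m i true t) : ℚ)) * hn
/-- The sublattice of `ℚ²` generated by `ℤ²` and the first `k − t` derived pairs
at level `t` of the derivation for `i = 1`. -/
def QOData.Gs (D : QOData) (k t : ℕ) : AddSubgroup (ℚ × ℚ) :=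
  AddSubgroup.closure
    ({((1:ℚ), (0:ℚ)), ((0:ℚ), (1:ℚ))} ∪
      {p : ℚ × ℚ | ∃ j, 1 ≤ j ∧ j ≤ k - t ∧
        p = (D.lam false false t j, D.lam false true t j)})

/-- The inverse of the linear map relating level-`t` pairs to level-`t+1` pairs. -/
def QOData.psi (D : QOData) (t : ℕ) (v : ℚ × ℚ) : ℚ × ℚ :=
  (v.1 / ((Nat.lcm (D.m false false t) (D.m false true t) / D.m false true t : ℕ) : ℚ)
      - (D.r false t : ℚ) * (D.n false false t : ℚ) / (D.m false false t : ℚ) * v.2,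
    v.2 / (D.m false true t : ℚ))

/-- The lattice `(1/A)ℤ × (1/B)ℤ`. -/
def latZ (A B : ℕ) : AddSubgroup (ℚ × ℚ) where
  carrier := {v | (∃ z : ℤ, (A : ℚ) * v.1 = z) ∧ ∃ z : ℤ, (B : ℚ) * v.2 = z}
  zero_mem' := ⟨⟨0, by simp⟩, ⟨0, by simp⟩⟩
  add_mem' := by
    rintro a b ⟨⟨z1, h1⟩, ⟨z2, h2⟩⟩ ⟨⟨w1, g1⟩, ⟨w2, g2⟩⟩
    refine ⟨⟨z1 + w1, ?_⟩, ⟨z2 + w2, ?_⟩⟩ <;>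
      push_cast <;> simp only [Prod.fst_add, Prod.snd_add, mul_add, h1, h2, g1, g2]
  neg_mem' := by
    rintro a ⟨⟨z1, h1⟩, ⟨z2, h2⟩⟩
    exact ⟨⟨-z1, by push_cast; simp [Prod.fst_neg, h1]⟩,
      ⟨-z2, by push_cast; simp [Prod.snd_neg, h2]⟩⟩
lemma QOData.psi_mem (D : QOData) (k : ℕ) (hke : k ≤ D.e) (t : ℕ) (ht : t + 1 ≤ k) :
    ∀ v ∈ D.Gs k (t + 1), D.psi t v ∈ D.Gs k t := by
  have he := D.he
  -- abbreviations and basic facts at level t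
  set m1 := D.m false false t with hm1def
  set m2 := D.m false true t with hm2def
  set n1 := D.n false false t with hn1def
  set n2 := D.n false true t with hn2def
  set d := Nat.lcm m1 m2 with hddef
  set b := d / m2 with hbdef
  have hte : t ≤ D.e - 1 := by omega
  have hm1 : 0 < m1 := D.m_pos false false t hte
  have hm2 : 0 < m2 := D.m_pos false true t hte
  have hd : 0 < d := Nat.pos_of_ne_zero (Nat.lcm_ne_zero hm1.ne' hm2.ne')
  have hbm2 : b * m2 = d := Nat.div_mul_cancel (Nat.dvd_lcm_right m1 m2)
  have hb : 0 < b := Nat.div_pos (Nat.le_of_dvd hd (Nat.dvd_lcm_right m1 m2)) hm2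
  set g := Nat.gcd m1 m2 with hgdef
  have hg : 0 < g := Nat.gcd_pos_of_pos_left m2 hm1
  have hbg : b * g = m1 := by
    have h1 : g * d = m1 * m2 := Nat.gcd_mul_lcm m1 m2
    have : b * g * m2 = m1 * m2 := by rw [mul_right_comm, hbm2, mul_comm d g, h1]
    exact Nat.eq_of_mul_eq_mul_right hm2 this
  have hm1Q : (m1 : ℚ) ≠ 0 := by exact_mod_cast hm1.ne'
  have hm2Q : (m2 : ℚ) ≠ 0 := by exact_mod_cast hm2.ne'
  have hbQ : (b : ℚ) ≠ 0 := by exact_mod_cast hb.ne'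
  have hlead1 : D.lam false false t 1 = (n1 : ℚ) / (m1 : ℚ) := D.lead false false t hte
  have hlead2 : D.lam false true t 1 = (n2 : ℚ) / (m2 : ℚ) := D.lead false true t hte
  have hrs : (m2 : ℤ) * (D.s false t : ℤ) - n2 * (D.r false t : ℤ) = 1 := D.rs_det false t hte
  -- generators of Gs k t
  have he1 : ((1:ℚ), (0:ℚ)) ∈ D.Gs k t :=
    AddSubgroup.subset_closure (Or.inl (Set.mem_insert _ _))
  have he2 : ((0:ℚ), (1:ℚ)) ∈ D.Gs k t :=
    AddSubgroup.subset_closure (Or.inl (Set.mem_insert_of_mem _ rfl))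
  have hpair : ∀ j, 1 ≤ j → j ≤ k - t →
      (D.lam false false t j, D.lam false true t j) ∈ D.Gs k t := fun j h1 h2 =>
    AddSubgroup.subset_closure (Or.inr ⟨j, h1, h2, rfl⟩)
  have hp1 : (D.lam false false t 1, D.lam false true t 1) ∈ D.Gs k t :=
    hpair 1 le_rfl (by omega)
  -- psi is additive
  have hψadd : ∀ x y : ℚ × ℚ, D.psi t (x + y) = D.psi t x + D.psi t y := by
    intro x y
    simp only [QOData.psi, Prod.fst_add, Prod.snd_add, Prod.mk_add_mk, Prod.mk.injEq]
    constructor <;> ring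
  have hψneg : ∀ x : ℚ × ℚ, D.psi t (-x) = -(D.psi t x) := by
    intro x
    simp only [QOData.psi, Prod.fst_neg, Prod.snd_neg, Prod.neg_mk, Prod.mk.injEq]
    constructor <;> ring
  intro v hv
  induction hv using AddSubgroup.closure_induction with
  | zero =>
    have : D.psi t 0 = 0 := by
      simp only [QOData.psi, Prod.fst_zero, Prod.snd_zero, zero_div, mul_zero, sub_zero]
      rfl
    rw [this]; exact zero_mem _
  | add x y hx hy ihx ihy => rw [hψadd]; exact add_mem ihx ihy
  | neg x hx ihx => rw [hψneg]; exact neg_mem ihx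
  | mem x hx =>
    rcases hx with (hx | hx) | ⟨j, hj1, hjk, rfl⟩
    · -- x = (1,0) : image is (1/b, 0)
      rcases hx with rfl
      have himg : D.psi t ((1:ℚ), (0:ℚ)) = (1 / (b : ℚ), 0) := by
        simp only [QOData.psi, ← hm1def, ← hm2def, ← hn1def, ← hddef, ← hbdef]
        norm_num
      rw [himg]
      -- Bézout between n1 * (m2/g) and b
      set m2' := m2 / g with hm2'def
      have hm2'g : m2' * g = m2 := Nat.div_mul_cancel (Nat.gcd_dvd_right m1 m2)
      have hbdvd : (b : ℤ) ∣ (m1 : ℤ) := ⟨(g : ℤ), by exact_mod_cast hbg.symm⟩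
      have hc1 : IsCoprime (n1 : ℤ) (b : ℤ) :=
        (Int.isCoprime_iff_gcd_eq_one.mpr (D.cop false false t hte)).of_isCoprime_of_dvd_right
          hbdvd
      have hbeq : m1 / g = b := by rw [← hbg, Nat.mul_div_cancel _ hg]
      have hc2 : IsCoprime ((m2' : ℤ)) (b : ℤ) := by
        rw [Int.isCoprime_iff_gcd_eq_one, Int.gcd_natCast_natCast]
        have := (Nat.coprime_div_gcd_div_gcd (m := m1) (n := m2) hg).symm
        rwa [hbeq] at this
      obtain ⟨yy, zz, hyz⟩ := (hc2.mul_left hc1 : IsCoprime ((m2' : ℤ) * n1) (b : ℤ))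
      -- the element
      have hel : yy • ((m2 : ℤ) • (D.lam false false t 1, D.lam false true t 1)
            - n2 • ((0:ℚ), (1:ℚ))) + zz • ((1:ℚ), (0:ℚ)) ∈ D.Gs k t :=
        add_mem (AddSubgroup.zsmul_mem _ (sub_mem (AddSubgroup.zsmul_mem _ hp1 _)
          (AddSubgroup.zsmul_mem _ he2 _)) _) (AddSubgroup.zsmul_mem _ he1 _)
      have heq : (1 / (b : ℚ), (0:ℚ)) =
          yy • ((m2 : ℤ) • (D.lam false false t 1, D.lam false true t 1)
            - n2 • ((0:ℚ), (1:ℚ))) + zz • ((1:ℚ), (0:ℚ)) := by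
        have hbgQ : (b : ℚ) * (g : ℚ) = (m1 : ℚ) := by exact_mod_cast hbg
        have hm2'Q : (m2' : ℚ) * (g : ℚ) = (m2 : ℚ) := by exact_mod_cast hm2'g
        have hval : (yy : ℚ) * (((m2 : ℤ) : ℚ) * ((n1 : ℚ) / (m1 : ℚ)) - (n2 : ℚ) * 0) + (zz : ℚ) * 1
            = ((yy * ((m2' : ℤ) * n1) + zz * (b : ℤ) : ℤ) : ℚ) / (b : ℚ) := by
          push_cast
          rw [← hbgQ, ← hm2'Q]
          field_simp
          ring
        simp only [Prod.smul_mk, smul_eq_mul, Prod.mk_sub_mk, Prod.mk_add_mk, Prod.mk.injEq,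
          zsmul_eq_mul, Prod.fst_sub, Prod.snd_sub, Prod.fst_add, Prod.snd_add, hlead1, hlead2]
        refine ⟨?_, by field_simp; push_cast; ring⟩
        rw [hval, hyz]
        norm_num
      rw [heq]; exact hel
    · -- x = (0,1) : image is (-(r n1 / m1), 1/m2)
      rcases hx with rfl
      have himg : D.psi t ((0:ℚ), (1:ℚ)) =
          (-((D.r false t : ℚ) * (n1 : ℚ) / (m1 : ℚ)), 1 / (m2 : ℚ)) := by
        simp only [QOData.psi, ← hm1def, ← hm2def, ← hn1def, ← hddef, ← hbdef]
        norm_num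
      rw [himg]
      have hel : (-(D.r false t : ℤ)) • (D.lam false false t 1, D.lam false true t 1)
            + (D.s false t : ℤ) • ((0:ℚ), (1:ℚ)) ∈ D.Gs k t :=
        add_mem (AddSubgroup.zsmul_mem _ hp1 _) (AddSubgroup.zsmul_mem _ he2 _)
      have heq : (-((D.r false t : ℚ) * (n1 : ℚ) / (m1 : ℚ)), 1 / (m2 : ℚ)) =
          (-(D.r false t : ℤ)) • (D.lam false false t 1, D.lam false true t 1)
            + (D.s false t : ℤ) • ((0:ℚ), (1:ℚ)) := by
        have hrsQ : (m2 : ℚ) * (D.s false t : ℚ) - (n2 : ℚ) * (D.r false t : ℚ) = 1 := by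
          exact_mod_cast hrs
        simp only [Prod.smul_mk, zsmul_eq_mul, Prod.mk_add_mk, Prod.mk.injEq, hlead1, hlead2]
        push_cast
        constructor
        · field_simp
          ring
        · field_simp
          linear_combination -hrsQ
      rw [heq]; exact hel
    · -- x = pair at level t+1
      have hrecO := D.rec_other false t j (by omega) hj1 (by omega)
      have hrecS := D.rec_self false t j (by omega) hj1 (by omega)
      simp only [Bool.not_false] at hrecO hrecS
      have hel : (D.lam false false t (j+1), D.lam false true t (j+1))
            + ((d : ℤ) - 1) • (D.lam false false t 1, D.lam false true t 1) ∈ D.Gs k t :=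
        add_mem (hpair (j+1) (by omega) (by omega)) (AddSubgroup.zsmul_mem _ hp1 _)
      have heq : D.psi t (D.lam false false (t+1) j, D.lam false true (t+1) j) =
          (D.lam false false t (j+1), D.lam false true t (j+1))
            + ((d : ℤ) - 1) • (D.lam false false t 1, D.lam false true t 1) := by
        simp only [QOData.psi, Prod.smul_mk, zsmul_eq_mul, Prod.mk_add_mk, Prod.mk.injEq]
        push_cast
        constructor
        · rw [hrecS, hlead1]
          simp only [← hm1def, ← hm2def, ← hn1def, ← hddef, ← hbdef]
          field_simp
          ring
        · rw [hrecO, hlead2]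
          simp only [← hm1def, ← hm2def, ← hn2def, ← hddef, ← hbdef]
          field_simp
          ring
      rw [heq]; exact hel
lemma QOData.det_chain (D : QOData) (k : ℕ) (hke : k ≤ D.e) :
    ∀ sd, sd ≤ k → ∃ w1 w2 : ℚ × ℚ, w1 ∈ D.Gs k (k - sd) ∧ w2 ∈ D.Gs k (k - sd) ∧
      (w1.1 * w2.2 - w2.1 * w1.2) *
        ((∏ l ∈ Finset.Ico (k - sd) k, D.dd false l : ℕ) : ℚ) = 1 := by
  have he := D.he
  intro sd
  induction sd with
  | zero =>
    intro _
    refine ⟨((1:ℚ), (0:ℚ)), ((0:ℚ), (1:ℚ)), ?_, ?_, by simp⟩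
    · exact AddSubgroup.subset_closure (Or.inl (Set.mem_insert _ _))
    · exact AddSubgroup.subset_closure (Or.inl (Set.mem_insert_of_mem _ rfl))
  | succ sd ih =>
    intro hsd
    obtain ⟨w1, w2, h1, h2, hdet⟩ := ih (by omega)
    set t := k - (sd + 1) with htdef
    have hts : k - sd = t + 1 := by omega
    have ht1 : t + 1 ≤ k := by omega
    rw [hts] at h1 h2 hdet
    refine ⟨D.psi t w1, D.psi t w2, D.psi_mem k hke t ht1 w1 h1, D.psi_mem k hke t ht1 w2 h2, ?_⟩
    have hte : t ≤ D.e - 1 := by omega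
    have hm1 : 0 < D.m false false t := D.m_pos false false t hte
    have hm2 : 0 < D.m false true t := D.m_pos false true t hte
    set m1 := D.m false false t
    set m2 := D.m false true t
    set dv := Nat.lcm m1 m2 with hddef
    set b := dv / m2 with hbdef
    have hd : 0 < dv := Nat.pos_of_ne_zero (Nat.lcm_ne_zero hm1.ne' hm2.ne')
    have hbm2 : b * m2 = dv := Nat.div_mul_cancel (Nat.dvd_lcm_right m1 m2)
    have hb : 0 < b := Nat.div_pos (Nat.le_of_dvd hd (Nat.dvd_lcm_right m1 m2)) hm2
    have hm2Q : (m2 : ℚ) ≠ 0 := by exact_mod_cast hm2.ne'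
    have hbQ : (b : ℚ) ≠ 0 := by exact_mod_cast hb.ne'
    have hsplit : (∏ l ∈ Finset.Ico t k, D.dd false l)
        = D.dd false t * ∏ l ∈ Finset.Ico (t + 1) k, D.dd false l :=
      Finset.prod_eq_prod_Ico_succ_bot (by omega) _
    have hddt : D.dd false t = dv := rfl
    have hdetψ : (D.psi t w1).1 * (D.psi t w2).2 - (D.psi t w2).1 * (D.psi t w1).2
        = (w1.1 * w2.2 - w2.1 * w1.2) / ((b : ℚ) * (m2 : ℚ)) := by
      simp only [QOData.psi]
      rw [show D.m false false t = m1 from rfl, show D.m false true t = m2 from rfl,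
        ← hddef, ← hbdef]
      field_simp
      ring
    rw [hdetψ, hsplit, hddt]
    push_cast at hdet ⊢
    have hbmQ : (b : ℚ) * (m2 : ℚ) = (dv : ℚ) := by exact_mod_cast hbm2
    rw [← hbmQ]
    rw [div_mul_eq_mul_div, div_eq_one_iff_eq (mul_ne_zero hbQ hm2Q)]
    linear_combination ((b : ℚ) * (m2 : ℚ)) * hdet
/-- The degree `d_• d_•' ⋯ d_•^{(k−1)}` of the surface defined by the first `k`
characteristic terms divides
`(m₁ m₁'(2) ⋯ m₁^{(k−1)}(2)) · (m₂ m₂'(1) ⋯ m₂^{(k−1)}(1))`. -/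
theorem degree_divides (D : QOData) (k : ℕ) (hk1 : 1 ≤ k) (hke : k ≤ D.e) :
    (∏ l ∈ Finset.range k, D.dd false l) ∣
      (∏ l ∈ Finset.range k, D.m true false l) * (∏ l ∈ Finset.range k, D.m false true l) := by
  set A := ∏ l ∈ Finset.range k, D.m true false l with hA
  set B := ∏ l ∈ Finset.range k, D.m false true l with hB
  set P := ∏ l ∈ Finset.range k, D.dd false l with hP
  -- the lattice G_0 lies in (1/A)ℤ × (1/B)ℤ
  have hsub : D.Gs k 0 ≤ latZ A B := by
    rw [QOData.Gs, AddSubgroup.closure_le]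
    rintro p ((rfl | rfl) | ⟨j, hj1, hjk, rfl⟩)
    · exact ⟨⟨(A : ℤ), by norm_num⟩, ⟨0, by norm_num⟩⟩
    · exact ⟨⟨0, by norm_num⟩, ⟨(B : ℤ), by norm_num⟩⟩
    · constructor
      · obtain ⟨z, hz⟩ := D.intB true k hke 0 j hj1 (by omega)
        refine ⟨z, ?_⟩
        simp only [Bool.not_true] at hz
        rw [hA, Finset.range_eq_Ico]
        rw [D.base false false j, ← D.base true false j]
        exact hz
      · obtain ⟨z, hz⟩ := D.intB false k hke 0 j hj1 (by omega)
        refine ⟨z, ?_⟩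
        simp only [Bool.not_false] at hz
        rw [hB, Finset.range_eq_Ico]
        exact hz
  obtain ⟨w1, w2, h1, h2, hdet⟩ := D.det_chain k hke k le_rfl
  rw [Nat.sub_self] at h1 h2 hdet
  obtain ⟨⟨za, hza⟩, ⟨zb, hzb⟩⟩ := hsub h1
  obtain ⟨⟨zc, hzc⟩, ⟨zd, hzd⟩⟩ := hsub h2
  -- A * B = (za * zd - zc * zb) * P
  have hcast : ((A * B : ℕ) : ℚ) = ((za * zd - zc * zb) * (P : ℤ) : ℤ) := by
    have hP0 : Finset.range k = Finset.Ico 0 k := by rw [Finset.range_eq_Ico]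
    have : ((A : ℚ) * (B : ℚ)) * ((w1.1 * w2.2 - w2.1 * w1.2) *
        ((∏ l ∈ Finset.Ico 0 k, D.dd false l : ℕ) : ℚ)) =
        ((za : ℚ) * zd - zc * zb) * ((∏ l ∈ Finset.Ico 0 k, D.dd false l : ℕ) : ℚ) := by
      have e1 : (A : ℚ) * w1.1 = za := hza
      have e2 : (B : ℚ) * w1.2 = zb := hzb
      have e3 : (A : ℚ) * w2.1 = zc := hzc
      have e4 : (B : ℚ) * w2.2 = zd := hzd
      set Q : ℚ := ((∏ l ∈ Finset.Ico 0 k, D.dd false l : ℕ) : ℚ) with hQ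
      linear_combination Q * ((B : ℚ) * w2.2) * e1 + Q * (za : ℚ) * e4
        - Q * ((B : ℚ) * w1.2) * e3 - Q * (zc : ℚ) * e2
    rw [hdet, mul_one] at this
    push_cast
    push_cast at this
    rw [hP, hP0]
    push_cast
    linarith [this]
  have hZ : (A * B : ℤ) = (za * zd - zc * zb) * (P : ℤ) := by exact_mod_cast hcast
  have : (P : ℤ) ∣ (A * B : ℤ) := ⟨za * zd - zc * zb, by rw [hZ]; ring⟩
  exact_mod_cast this
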